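/- Let u, w be integers with u ≥ 2 and w ≥ 2, and let B be the (u+1)×(w+1) real matrix all of whose entries equal 1 except B[1, 1] = 0 and B[u+1, w+1] = 0 (the upper-left and lower-right corners). Then the minimum of N_index(B,Π,Φ) over all contiguous row partitions Π of {1,…,u+1} in which every part has size at most u and all contiguous column partitions Φ of {1,…,w+1} in which every part has size at most w is exactly 3. -/

import Mathlib

open Finset
open scoped Classical

/-- A contiguous partition of `{0, …, m-1}` into `K` nonempty consecutive intervals,
represented by its split points `t 0 = 0 < t 1 < ⋯ < t K = m`; the `k`-th part
(for `0 ≤ k < K`) is the interval `[t k, t (k+1))`. -/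
structure ContigPartition (m : ℕ) where
  K : ℕ
  t : ℕ → ℕ
  t0 : t 0 = 0
  tK : t K = m
  mono : ∀ k < K, t k < t (k + 1)

/-- Block `(k, l)` of `A` (rows from part `k` of `P`, columns from part `l` of `Q`)
contains a nonzero entry of `A`. -/
def blockNonzero {m n : ℕ} (A : Matrix (Fin m) (Fin n) ℝ)
    (P : ContigPartition m) (Q : ContigPartition n) (k l : ℕ) : Prop :=
  ∃ i : Fin m, ∃ j : Fin n,
    P.t k ≤ (i : ℕ) ∧ (i : ℕ) < P.t (k + 1) ∧
    Q.t l ≤ (j : ℕ) ∧ (j : ℕ) < Q.t (l + 1) ∧ A i j ≠ 0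

/-- `N_index(A, P, Q)`: the number of nonzero blocks. -/
noncomputable def Nindex {m n : ℕ} (A : Matrix (Fin m) (Fin n) ℝ)
    (P : ContigPartition m) (Q : ContigPartition n) : ℕ :=
  ((Finset.range P.K ×ˢ Finset.range Q.K).filter
    (fun kl => blockNonzero A P Q kl.1 kl.2)).card

/-- `N_value(A, P, Q)`: the total number of entries in all nonzero blocks. -/
noncomputable def Nvalue {m n : ℕ} (A : Matrix (Fin m) (Fin n) ℝ)
    (P : ContigPartition m) (Q : ContigPartition n) : ℕ :=
  ∑ kl ∈ (Finset.range P.K ×ˢ Finset.range Q.K).filter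
      (fun kl => blockNonzero A P Q kl.1 kl.2),
    (P.t (kl.1 + 1) - P.t kl.1) * (Q.t (kl.2 + 1) - Q.t kl.2)

/-- For the `(u+1) × (w+1)` gadget matrix that is all nonzero except its
upper-left and lower-right corner entries, the minimum number of nonzero blocks
over all contiguous row partitions with parts of size at most `u` and column
partitions with parts of size at most `w` is exactly `3`. -/
theorem gadget_B2_min_blocks (u w : ℕ) (hu : 2 ≤ u) (hw : 2 ≤ w)
    (B : Matrix (Fin (u + 1)) (Fin (w + 1)) ℝ)
    (hB : ∀ (i : Fin (u + 1)) (j : Fin (w + 1)),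
      B i j = if ((i : ℕ) = 0 ∧ (j : ℕ) = 0) ∨ ((i : ℕ) = u ∧ (j : ℕ) = w)
        then 0 else 1) :
    IsLeast { x : ℕ | ∃ (P : ContigPartition (u + 1)) (Q : ContigPartition (w + 1)),
        (∀ k < P.K, P.t (k + 1) - P.t k ≤ u) ∧
        (∀ l < Q.K, Q.t (l + 1) - Q.t l ≤ w) ∧
        Nindex B P Q = x } 3 := by
  have hBne : ∀ (i : Fin (u + 1)) (j : Fin (w + 1)),
      ¬((i : ℕ) = 0 ∧ (j : ℕ) = 0) → ¬((i : ℕ) = u ∧ (j : ℕ) = w) → B i j ≠ 0 := by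
    intro i j h1 h2
    rw [hB, if_neg (by tauto)]
    exact one_ne_zero
  constructor
  · -- 3 is attained
    set tP : ℕ → ℕ := fun k => if k = 0 then 0 else if k = 1 then 1 else u + 1 with htP
    set tQ : ℕ → ℕ := fun l => if l = 0 then 0 else if l = 1 then 1 else w + 1 with htQ
    have hmP : ∀ k < 2, tP k < tP (k + 1) := by
      intro k hk; interval_cases k <;> simp [htP] <;> omega
    have hmQ : ∀ l < 2, tQ l < tQ (l + 1) := by
      intro l hl; interval_cases l <;> simp [htQ] <;> omega
    set P : ContigPartition (u + 1) := ⟨2, tP, rfl, rfl, hmP⟩ with hPdef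
    set Q : ContigPartition (w + 1) := ⟨2, tQ, rfl, rfl, hmQ⟩ with hQdef
    refine ⟨P, Q, ?_, ?_, ?_⟩
    · intro k hk
      have hk2 : k < 2 := hk
      interval_cases k <;> simp [hPdef, htP] <;> omega
    · intro l hl
      have hl2 : l < 2 := hl
      interval_cases l <;> simp [hQdef, htQ] <;> omega
    · have h00 : ¬ blockNonzero B P Q 0 0 := by
        rintro ⟨i, j, h1, h2, h3, h4, h5⟩
        apply h5
        rw [hB, if_pos]
        have hi : (i : ℕ) < 1 := h2
        have hj : (j : ℕ) < 1 := h4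
        exact Or.inl ⟨by omega, by omega⟩
      have h01 : blockNonzero B P Q 0 1 := by
        refine ⟨⟨0, by omega⟩, ⟨1, by omega⟩, ?_, ?_, ?_, ?_, ?_⟩
        · exact Nat.le_refl 0
        · exact Nat.lt_irrefl 0 |> fun _ => Nat.zero_lt_one
        · exact Nat.le_refl 1
        · show (1 : ℕ) < w + 1; omega
        · apply hBne <;> simp <;> omega
      have h10 : blockNonzero B P Q 1 0 := by
        refine ⟨⟨u, by omega⟩, ⟨0, by omega⟩, ?_, ?_, ?_, ?_, ?_⟩
        · show (1 : ℕ) ≤ u; omega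
        · show u < u + 1; omega
        · exact Nat.le_refl 0
        · exact Nat.zero_lt_one
        · apply hBne <;> simp <;> omega
      have h11 : blockNonzero B P Q 1 1 := by
        refine ⟨⟨1, by omega⟩, ⟨1, by omega⟩, ?_, ?_, ?_, ?_, ?_⟩
        · exact Nat.le_refl 1
        · show (1 : ℕ) < u + 1; omega
        · exact Nat.le_refl 1
        · show (1 : ℕ) < w + 1; omega
        · apply hBne <;> simp <;> omega
      have hPK : P.K = 2 := rfl
      have hQK : Q.K = 2 := rfl
      unfold Nindex
      rw [show (Finset.range 2 ×ˢ Finset.range 2)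
          = ({(0, 0), (0, 1), (1, 0), (1, 1)} : Finset (ℕ × ℕ)) from by decide]
      rw [Finset.filter_insert, if_neg h00, Finset.filter_insert, if_pos h01,
        Finset.filter_insert, if_pos h10, Finset.filter_singleton, if_pos h11]
      decide
  · -- lower bound
    rintro x ⟨P, Q, hPsz, hQsz, rfl⟩
    have ht0 := P.t0
    have htK := P.tK
    have hs0 := Q.t0
    have hsK := Q.tK
    have hK2 : 2 ≤ P.K := by
      by_contra h
      push_neg at h
      rcases (by omega : P.K = 0 ∨ P.K = 1) with h' | h'
      · rw [h', ht0] at htK; omega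
      · have hs := hPsz 0 (by omega)
        rw [ht0] at hs
        norm_num at hs
        rw [h'] at htK
        omega
    have hL2 : 2 ≤ Q.K := by
      by_contra h
      push_neg at h
      rcases (by omega : Q.K = 0 ∨ Q.K = 1) with h' | h'
      · rw [h', hs0] at hsK; omega
      · have hs := hQsz 0 (by omega)
        rw [hs0] at hs
        norm_num at hs
        rw [h'] at hsK
        omega
    -- basic monotonicity facts
    have hP1 : 0 < P.t 1 := by
      have h := P.mono 0 (by omega); norm_num at h; omega
    have hQ1 : 0 < Q.t 1 := by
      have h := Q.mono 0 (by omega); norm_num at h; omega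
    have hPlast : P.t (P.K - 1) ≤ u := by
      have h := P.mono (P.K - 1) (by omega)
      rw [show P.K - 1 + 1 = P.K from by omega, htK] at h
      omega
    have hQlast : Q.t (Q.K - 1) ≤ w := by
      have h := Q.mono (Q.K - 1) (by omega)
      rw [show Q.K - 1 + 1 = Q.K from by omega, hsK] at h
      omega
    have hPlast' : P.t (P.K - 1 + 1) = u + 1 := by
      rw [show P.K - 1 + 1 = P.K from by omega, htK]
    have hQlast' : Q.t (Q.K - 1 + 1) = w + 1 := by
      rw [show Q.K - 1 + 1 = Q.K from by omega, hsK]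
    -- the two guaranteed nonzero corner blocks
    have ha : blockNonzero B P Q 0 (Q.K - 1) := by
      refine ⟨⟨0, by omega⟩, ⟨w, by omega⟩, ?_, ?_, ?_, ?_, ?_⟩
      · show P.t 0 ≤ 0; omega
      · show (0 : ℕ) < P.t (0 + 1); simpa using hP1
      · show Q.t (Q.K - 1) ≤ w; omega
      · show w < Q.t (Q.K - 1 + 1); rw [hQlast']; omega
      · refine hBne _ _ ?_ ?_
        · show ¬((0 : ℕ) = 0 ∧ w = 0); omega
        · show ¬((0 : ℕ) = u ∧ w = w); omega
    have hb : blockNonzero B P Q (P.K - 1) 0 := by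
      refine ⟨⟨u, by omega⟩, ⟨0, by omega⟩, ?_, ?_, ?_, ?_, ?_⟩
      · show P.t (P.K - 1) ≤ u; omega
      · show u < P.t (P.K - 1 + 1); rw [hPlast']; omega
      · show Q.t 0 ≤ 0; omega
      · show (0 : ℕ) < Q.t (0 + 1); simpa using hQ1
      · refine hBne _ _ ?_ ?_
        · show ¬(u = 0 ∧ (0 : ℕ) = 0); omega
        · show ¬(u = u ∧ (0 : ℕ) = w); omega
    -- given any third nonzero block distinct from the two above, we are done
    have main : ∀ c : ℕ × ℕ, c.1 < P.K → c.2 < Q.K → c ≠ (0, Q.K - 1) →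
        c ≠ (P.K - 1, 0) → blockNonzero B P Q c.1 c.2 → 3 ≤ Nindex B P Q := by
      intro c hc1 hc2 hca hcb hcnz
      have hab : ((0 : ℕ), Q.K - 1) ≠ (P.K - 1, (0 : ℕ)) := by
        simp only [ne_eq, Prod.mk.injEq]; omega
      have hcard : ({(0, Q.K - 1), (P.K - 1, 0), c} : Finset (ℕ × ℕ)).card = 3 := by
        rw [Finset.card_insert_of_notMem, Finset.card_insert_of_notMem,
          Finset.card_singleton]
        · simp only [Finset.mem_singleton]
          exact fun h => hcb h.symm
        · simp only [Finset.mem_insert, Finset.mem_singleton]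
          push_neg
          exact ⟨hab, fun h => hca h.symm⟩
      have hsub : ({(0, Q.K - 1), (P.K - 1, 0), c} : Finset (ℕ × ℕ)) ⊆
          (Finset.range P.K ×ˢ Finset.range Q.K).filter
            (fun kl => blockNonzero B P Q kl.1 kl.2) := by
        intro y hy
        simp only [Finset.mem_insert, Finset.mem_singleton] at hy
        rw [Finset.mem_filter, Finset.mem_product, Finset.mem_range, Finset.mem_range]
        rcases hy with rfl | rfl | rfl
        · exact ⟨⟨by omega, by omega⟩, ha⟩
        · exact ⟨⟨by omega, by omega⟩, hb⟩
        · exact ⟨⟨hc1, hc2⟩, hcnz⟩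
      calc 3 = ({(0, Q.K - 1), (P.K - 1, 0), c} : Finset (ℕ × ℕ)).card := hcard.symm
        _ ≤ _ := Finset.card_le_card hsub
      
    by_cases h1 : 2 ≤ Q.t 1
    · -- block (0,0) contains entry (0,1)
      apply main (0, 0) (by omega) (by omega)
        (by simp only [ne_eq, Prod.mk.injEq]; omega)
        (by simp only [ne_eq, Prod.mk.injEq]; omega)
      refine ⟨⟨0, by omega⟩, ⟨1, by omega⟩, ?_, ?_, ?_, ?_, ?_⟩
      · show P.t 0 ≤ 0; omega
      · show (0 : ℕ) < P.t (0 + 1); simpa using hP1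
      · show Q.t 0 ≤ 1; omega
      · show (1 : ℕ) < Q.t (0 + 1); simp; omega
      · refine hBne _ _ ?_ ?_
        · show ¬((0 : ℕ) = 0 ∧ (1 : ℕ) = 0); omega
        · show ¬((0 : ℕ) = u ∧ (1 : ℕ) = w); omega
    · push_neg at h1
      have hQ1' : Q.t 1 = 1 := by omega
      by_cases h2 : Q.t (Q.K - 1) < w
      · -- block (K-1, L-1) contains entry (u, w-1)
        apply main (P.K - 1, Q.K - 1) (by omega) (by omega)
          (by simp only [ne_eq, Prod.mk.injEq]; omega)
          (by simp only [ne_eq, Prod.mk.injEq]; omega)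
        refine ⟨⟨u, by omega⟩, ⟨w - 1, by omega⟩, ?_, ?_, ?_, ?_, ?_⟩
        · show P.t (P.K - 1) ≤ u; omega
        · show u < P.t (P.K - 1 + 1); rw [hPlast']; omega
        · show Q.t (Q.K - 1) ≤ w - 1; omega
        · show w - 1 < Q.t (Q.K - 1 + 1); rw [hQlast']; omega
        · refine hBne _ _ ?_ ?_
          · show ¬(u = 0 ∧ w - 1 = 0); omega
          · show ¬(u = u ∧ w - 1 = w); omega
      · push_neg at h2
        have h2' : Q.t (Q.K - 1) = w := by omega
        have hL3 : 3 ≤ Q.K := by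
          rcases (by omega : Q.K = 2 ∨ 3 ≤ Q.K) with h' | h'
          · exfalso
            have : Q.t (Q.K - 1) = Q.t 1 := by rw [h']
            omega
          · exact h'
        -- block (0, 1) contains entry (0, 1)
        have hQ2 : 1 < Q.t 2 := by
          have h := Q.mono 1 (by omega); norm_num at h; omega
        apply main (0, 1) (by omega) (by omega)
          (by simp only [ne_eq, Prod.mk.injEq]; omega)
          (by simp only [ne_eq, Prod.mk.injEq]; omega)
        refine ⟨⟨0, by omega⟩, ⟨1, by omega⟩, ?_, ?_, ?_, ?_, ?_⟩
        · show P.t 0 ≤ 0; omega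
        · show (0 : ℕ) < P.t (0 + 1); simpa using hP1
        · show Q.t 1 ≤ 1; omega
        · show (1 : ℕ) < Q.t (1 + 1); simpa using hQ2
        · refine hBne _ _ ?_ ?_
          · show ¬((0 : ℕ) = 0 ∧ (1 : ℕ) = 0); omega
          · show ¬((0 : ℕ) = u ∧ (1 : ℕ) = w); omega
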